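/- arXiv:math/0703528 — 2 statements merged into one kernel-verified Lean document; each statement's English description precedes it below -/
import Mathlib

section
/- (Jantzen filtration sum formula over a DVR.) Let A be a discrete valuation ring with uniformizer t, residue field k = A/(t), and valuation ν_t. Let M and N be free A-modules of the same finite rank n and let c : M → N be an A-linear map that becomes an isomorphism after tensoring with the fraction field. Define M^{(j)} = {v ∈ M : c(v) ∈ t^j N} and let M̄^{(j)} denote the image of M^{(j)} in M̄ = M/tM. Then ∑_{j≥1} dim_k M̄^{(j)} = ν_t(det c). -/
section aux

variable {A : Type*} [CommRing A] {M : Type*} [AddCommGroup M] [Module A M]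

lemma exists_smul_iff_dvd_repr {ι : Type*} [Fintype ι] (b : Module.Basis ι A M) (s : A) (u : M) :
    (∃ w, u = s • w) ↔ ∀ i, s ∣ b.repr u i := by
  constructor
  · rintro ⟨w, rfl⟩ i
    exact ⟨b.repr w i, by simp⟩
  · intro h
    choose g hg using h
    refine ⟨∑ i, g i • b i, ?_⟩
    conv_lhs => rw [← b.sum_repr u]
    rw [Finset.smul_sum]
    exact Finset.sum_congr rfl fun i _ => by rw [hg i, mul_smul]

end aux

/-- Jantzen filtration sum formula over a DVR.  Let `A` be a DVR
with uniformizer `t` and residue field `k`, `M = N = A^n` free of rank `n`, and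
`c : M → N` an `A`-linear map which becomes an isomorphism over the fraction field.
Let `M^{(j)} = {v ∈ M : c v ∈ t^j N}` and let `M̄^{(j)}` be the image of `M^{(j)}` in
`M/tM ≅ k^n` (reduction of coordinates mod the maximal ideal).  If
`ν_t(det c) = d` (i.e. `det c` is associated to `t^d`), then
`∑_{j ≥ 1} dim_k M̄^{(j)} = d`. -/
theorem stmt8 {A : Type*} [CommRing A] [IsDomain A] [IsDiscreteValuationRing A]
    (t : A) (ht : Irreducible t) (n : ℕ)
    (c : (Fin n → A) →ₗ[A] (Fin n → A))
    (hc : Function.Bijective (LinearMap.baseChange (FractionRing A) c))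
    (d : ℕ) (hd : Associated (LinearMap.det c) (t ^ d)) :
    ∑' j : ℕ,
      (Module.finrank (IsLocalRing.ResidueField A)
        (Submodule.span (IsLocalRing.ResidueField A)
          ((fun v i => IsLocalRing.residue A (v i)) ''
            {v : Fin n → A | ∀ i, t ^ (j + 1) ∣ c v i})) : ENNReal)
      = (d : ENNReal) := by
  classical
  have ht0 : t ≠ 0 := ht.ne_zero
  have hdetc : LinearMap.det c ≠ 0 := by
    intro h
    rw [h] at hd
    exact pow_ne_zero d ht0 ((associated_zero_iff_eq_zero _).mp hd.symm)
  -- c is injective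
  have hcinj : Function.Injective c := by
    have h0 : ∀ v, c v = 0 → v = 0 := by
      intro v hv
      set K := FractionRing A
      set φ := algebraMap A K with hφdef
      have hφ : Function.Injective φ := IsFractionRing.injective A K
      set C := LinearMap.toMatrix' c with hC
      have hmv : C.mulVec v = 0 := by
        rw [hC, ← Matrix.toLin'_apply, Matrix.toLin'_toMatrix', hv]
      have hdet2 : (C.map φ).det ≠ 0 := by
        rw [show (C.map ⇑φ) = φ.mapMatrix C from rfl, ← RingHom.map_det]
        intro h
        apply hdetc
        apply hφ
        rw [hC, LinearMap.det_toMatrix'] at h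
        simpa using h
      have hinj2 : Function.Injective (C.map φ).mulVec :=
        Matrix.mulVec_injective_iff_isUnit.mpr
          ((Matrix.isUnit_iff_isUnit_det _).mpr (isUnit_iff_ne_zero.mpr hdet2))
      have heq : (C.map φ).mulVec (φ ∘ v) = (C.map φ).mulVec 0 := by
        rw [Matrix.mulVec_zero]
        funext i
        rw [← RingHom.map_mulVec, hmv]
        simp
      have := hinj2 heq
      funext i
      exact hφ (by simpa using congrFun this i)
    intro x y h
    have := h0 (x - y) (by rw [map_sub, h, sub_self])
    exact sub_eq_zero.mp this
  -- Smith normal form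
  obtain ⟨m, bM, bN, f, a, hsnf⟩ :=
    (LinearMap.range c).smithNormalForm (Pi.basisFun A (Fin n))
  set e := LinearEquiv.ofInjective c hcinj with he
  have hmn : n = m := by
    have h1 := Fintype.card_congr ((bN.map e.symm).indexEquiv (Pi.basisFun A (Fin n)))
    simpa using h1.symm
  subst hmn
  set b' : Module.Basis (Fin n) A (Fin n → A) := bN.map e.symm with hb'
  have hcb' : ∀ i, c (b' i) = a i • bM (f i) := by
    intro i
    rw [hb', Module.Basis.map_apply]
    have h1 : c (e.symm (bN i)) = ((bN i : Fin n → A)) := by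
      have h2 := e.apply_symm_apply (bN i)
      calc c (e.symm (bN i)) = ↑(e (e.symm (bN i))) := rfl
        _ = ↑(bN i) := by rw [h2]
    rw [h1]
    exact hsnf i
  set σ : Fin n ≃ Fin n :=
    Equiv.ofBijective f ((Fintype.bijective_iff_injective_and_card f).mpr ⟨f.injective, rfl⟩)
    with hσ
  have hfσ : ∀ i, f i = σ i := fun i => rfl
  have ha0 : ∀ i, a i ≠ 0 := by
    intro i h
    apply bN.ne_zero i
    have h2 : (bN i : Fin n → A) = 0 := by rw [hsnf i, h, zero_smul]
    exact ZeroMemClass.coe_eq_zero.mp h2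
  choose ee uu huu using fun i => IsDiscreteValuationRing.eq_unit_mul_pow_irreducible (ha0 i) ht
  -- determinant computation
  set b'' := b'.reindex σ with hb''
  have hcb'' : ∀ i, c (b'' i) = a (σ.symm i) • bM i := by
    intro i
    rw [hb'', Module.Basis.reindex_apply, hcb', hfσ, Equiv.apply_symm_apply]
  have hmat : LinearMap.toMatrix b'' bM c = Matrix.diagonal (fun i => a (σ.symm i)) := by
    ext j i
    rw [LinearMap.toMatrix_apply, hcb'', map_smul]
    rcases eq_or_ne j i with rfl | hne
    · simp [Matrix.diagonal]
    · simp [Matrix.diagonal_apply_ne _ hne, Finsupp.single_apply, Ne.symm hne]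
  have hdet_eq : LinearMap.det c * (LinearMap.toMatrix b'' bM (LinearMap.id)).det = ∏ i, a i := by
    have h1 : LinearMap.toMatrix b'' bM c =
        LinearMap.toMatrix bM bM c * LinearMap.toMatrix b'' bM LinearMap.id := by
      rw [← LinearMap.toMatrix_comp b'' bM bM c LinearMap.id, LinearMap.comp_id]
    have h2 := congrArg Matrix.det h1
    rw [Matrix.det_mul, LinearMap.det_toMatrix, hmat, Matrix.det_diagonal] at h2
    rw [← h2]
    exact Equiv.prod_comp σ.symm a
  have hPunit : IsUnit (LinearMap.toMatrix b'' bM (LinearMap.id)).det := by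
    rw [LinearMap.toMatrix_id_eq_basis_toMatrix, ← Module.Basis.det_apply]
    exact (Module.Basis.is_basis_iff_det bM).mp ⟨b''.linearIndependent, b''.span_eq⟩
  have hsum_ee : ∑ i, ee i = d := by
    have h3 : Associated (LinearMap.det c) (∏ i, a i) :=
      ⟨hPunit.unit, by rw [IsUnit.unit_spec, hdet_eq]⟩
    have h4 : ∏ i, a i = (↑(∏ i, uu i) : A) * t ^ (∑ i, ee i) := by
      rw [Units.coe_prod]
      calc ∏ i, a i = ∏ i, ((uu i : A) * t ^ ee i) := Finset.prod_congr rfl fun i _ => huu i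
        _ = (∏ i, (uu i : A)) * ∏ i, t ^ ee i := Finset.prod_mul_distrib
        _ = _ := by rw [Finset.prod_pow_eq_pow_sum]
    have h5 : Associated (t ^ (∑ i, ee i)) (∏ i, a i) :=
      ⟨∏ i, uu i, by rw [h4, mul_comm]⟩
    have h6 : Associated (t ^ (∑ i, ee i)) (t ^ d) := h5.trans (h3.symm.trans hd)
    obtain ⟨v, hv⟩ := h6
    refine IsDiscreteValuationRing.unit_mul_pow_congr_pow ht ht v 1 _ _ ?_
    rw [Units.val_one, one_mul, ← hv]
    ring
  -- representation of c in the bases b' and bM2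
  set bM2 := bM.reindex σ.symm with hbM2
  have hbM2a : ∀ i, bM2 i = bM (f i) := by
    intro i
    rw [hbM2, Module.Basis.reindex_apply, Equiv.symm_symm, hfσ]
  have hrepr : ∀ (v : Fin n → A) i, bM2.repr (c v) i = a i * b'.repr v i := by
    intro v i
    have hv : c v = ∑ j, (a j * b'.repr v j) • bM2 j := by
      conv_lhs => rw [← b'.sum_repr v]
      rw [map_sum]
      refine Finset.sum_congr rfl fun j _ => ?_
      rw [map_smul, hcb', ← hbM2a, smul_smul, mul_comm]
    rw [hv]
    have := bM2.repr_sum_self (fun j => a j * b'.repr v j)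
    rw [this]
  have hdvd_iff : ∀ (s : A) (u : Fin n → A) (b : Module.Basis (Fin n) A (Fin n → A)),
      (∀ i, s ∣ u i) ↔ ∀ i, s ∣ b.repr u i := by
    intro s u b
    rw [← exists_smul_iff_dvd_repr b]
    constructor
    · intro h
      choose g hg using h
      exact ⟨g, funext fun i => by rw [Pi.smul_apply, smul_eq_mul, ← hg i]⟩
    · rintro ⟨w, rfl⟩ i
      exact ⟨w i, rfl⟩
  have hmemJ : ∀ (J : ℕ) (v : Fin n → A),
      (∀ i, t ^ J ∣ c v i) ↔ ∀ i, t ^ J ∣ a i * b'.repr v i := by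
    intro J v
    rw [hdvd_iff _ _ bM2]
    exact forall_congr' fun i => by rw [hrepr]
  -- residue field side
  set ρ : (Fin n → A) → (Fin n → IsLocalRing.ResidueField A) :=
    fun v i => IsLocalRing.residue A (v i) with hρ
  set w : Fin n → (Fin n → IsLocalRing.ResidueField A) := fun i => ρ (b' i) with hw
  have hρ_sum : ∀ (g : Fin n → A),
      ρ (∑ j, g j • b' j) = ∑ j, IsLocalRing.residue A (g j) • w j := by
    intro g
    funext i
    simp only [hρ, hw, Finset.sum_apply, Pi.smul_apply, smul_eq_mul, map_sum, map_mul]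
  have hres0 : ∀ x : A, IsLocalRing.residue A x = 0 ↔ t ∣ x := by
    intro x
    rw [IsLocalRing.residue_eq_zero_iff,
      (IsDiscreteValuationRing.irreducible_iff_uniformizer t).mp ht, Ideal.mem_span_singleton]
  have hw_li : LinearIndependent (IsLocalRing.ResidueField A) w := by
    rw [Fintype.linearIndependent_iff]
    intro l hl
    choose g hg using fun i => IsLocalRing.residue_surjective (R := A) (l i)
    intro i
    have h1 : ρ (∑ j, g j • b' j) = 0 := by
      rw [hρ_sum]
      simpa [hg] using hl
    have h2 : ∀ i', t ∣ (∑ j, g j • b' j) i' := by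
      intro i'
      rw [← hres0]
      exact congrFun h1 i'
    have h3 := (hdvd_iff t _ b').mp h2 i
    rw [b'.repr_sum_self] at h3
    rw [← hg i, hres0]
    exact h3
  -- identification of the spans
  have hspan : ∀ j : ℕ,
      Submodule.span (IsLocalRing.ResidueField A) (ρ '' {v | ∀ i, t ^ (j + 1) ∣ c v i}) =
      Submodule.span (IsLocalRing.ResidueField A) (w '' {i | j + 1 ≤ ee i}) := by
    intro j
    apply le_antisymm
    · rw [Submodule.span_le]
      rintro _ ⟨v, hv, rfl⟩
      rw [Set.mem_setOf_eq, hmemJ] at hv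
      have hv2 : ρ v = ∑ i, IsLocalRing.residue A (b'.repr v i) • w i := by
        conv_lhs => rw [← b'.sum_repr v]
        exact hρ_sum _
      rw [SetLike.mem_coe, hv2]
      apply Submodule.sum_mem
      intro i _
      by_cases hi : j + 1 ≤ ee i
      · exact Submodule.smul_mem _ _ (Submodule.subset_span ⟨i, hi, rfl⟩)
      · have hdvd : t ∣ b'.repr v i := by
          have h5 := hv i
          rw [huu i] at h5
          have h6 : t ^ ee i * t ∣ t ^ (j + 1) := by
            rw [← pow_succ]
            exact pow_dvd_pow t (by omega)
          have h7 : t ^ ee i * t ∣ t ^ ee i * ((uu i : A) * b'.repr v i) := by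
            have heq : (↑(uu i) * t ^ ee i) * b'.repr v i =
                t ^ ee i * ((uu i : A) * b'.repr v i) := by ring
            rw [heq] at h5
            exact h6.trans h5
          have h8 : t ∣ (uu i : A) * b'.repr v i :=
            (mul_dvd_mul_iff_left (pow_ne_zero (ee i) ht0)).mp h7
          exact (Units.dvd_mul_left).mp h8
        rw [(hres0 _).mpr hdvd, zero_smul]
        exact Submodule.zero_mem _
    · rw [Submodule.span_le]
      rintro _ ⟨i, hi, rfl⟩
      apply Submodule.subset_span
      refine ⟨b' i, ?_, rfl⟩
      rw [Set.mem_setOf_eq, hmemJ]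
      intro i'
      rcases eq_or_ne i' i with rfl | hne
      · rw [b'.repr_self, Finsupp.single_eq_same, mul_one, huu i']
        exact Dvd.dvd.mul_left (pow_dvd_pow t hi) _
      · rw [b'.repr_self, Finsupp.single_eq_of_ne hne, mul_zero]
        exact dvd_zero _
  -- dimension count
  have hrank : ∀ j : ℕ,
      Module.finrank (IsLocalRing.ResidueField A)
        (Submodule.span (IsLocalRing.ResidueField A) (w '' {i | j + 1 ≤ ee i})) =
      (Finset.univ.filter (fun i => j + 1 ≤ ee i)).card := by
    intro j
    rw [Set.image_eq_range]
    have hli := hw_li.comp (Subtype.val : {i | j + 1 ≤ ee i} → Fin n) Subtype.val_injective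
    rw [show (fun x : ↥{i | j + 1 ≤ ee i} => w ↑x) = w ∘ Subtype.val from rfl,
      finrank_span_eq_card hli]
    simp [Fintype.card_subtype]
  -- put everything together
  have hterm : ∀ j : ℕ,
      (Module.finrank (IsLocalRing.ResidueField A)
        (Submodule.span (IsLocalRing.ResidueField A)
          (ρ '' {v : Fin n → A | ∀ i, t ^ (j + 1) ∣ c v i}))) =
      (Finset.univ.filter (fun i => j + 1 ≤ ee i)).card := by
    intro j
    rw [hspan j, hrank j]
  calc ∑' j : ℕ, (Module.finrank (IsLocalRing.ResidueField A)
        (Submodule.span (IsLocalRing.ResidueField A)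
          (ρ '' {v : Fin n → A | ∀ i, t ^ (j + 1) ∣ c v i})) : ENNReal)
      = ∑' j : ℕ, ((Finset.univ.filter (fun i => j + 1 ≤ ee i)).card : ENNReal) := by
        exact tsum_congr fun j => by rw [hterm j]
    _ = ∑ j ∈ Finset.range d, ((Finset.univ.filter (fun i => j + 1 ≤ ee i)).card : ENNReal) := by
        apply tsum_eq_sum
        intro j hj
        have hempty : Finset.univ.filter (fun i => j + 1 ≤ ee i) = ∅ := by
          rw [Finset.filter_eq_empty_iff]
          intro i _
          rw [Finset.mem_range, not_lt] at hj
          have h9 : ee i ≤ ∑ i', ee i' :=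
            Finset.single_le_sum (fun _ _ => Nat.zero_le _) (Finset.mem_univ i)
          omega
        rw [hempty]
        simp
    _ = ((∑ j ∈ Finset.range d, (Finset.univ.filter (fun i => j + 1 ≤ ee i)).card : ℕ) :
          ENNReal) := by
        rw [Nat.cast_sum]
    _ = (d : ENNReal) := by
        norm_cast
        calc ∑ j ∈ Finset.range d, (Finset.univ.filter (fun i => j + 1 ≤ ee i)).card
            = ∑ j ∈ Finset.range d, ∑ i, (if j + 1 ≤ ee i then 1 else 0) := by
              exact Finset.sum_congr rfl fun j _ => Finset.card_filter _ _
          _ = ∑ i, ∑ j ∈ Finset.range d, (if j + 1 ≤ ee i then 1 else 0) := Finset.sum_comm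
          _ = ∑ i, ee i := by
              refine Finset.sum_congr rfl fun i _ => ?_
              rw [← Finset.card_filter]
              have hfil : (Finset.range d).filter (fun j => j + 1 ≤ ee i) =
                  Finset.range (ee i) := by
                ext j
                simp only [Finset.mem_filter, Finset.mem_range]
                constructor
                · rintro ⟨_, h⟩; omega
                · intro h
                  have h9 : ee i ≤ ∑ i', ee i' :=
                    Finset.single_le_sum (fun _ _ => Nat.zero_le _) (Finset.mem_univ i)
                  omega
              rw [hfil, Finset.card_range]
          _ = d := hsum_ee
end

section
/- Let A be a discrete valuation ring with uniformizer t and residue field k, let M and N be free A-modules of rank n, and let c : M → N, c' : N → M be A-linear maps with c∘c' = t^ℓ·id_N and c'∘c = t^ℓ·id_M for some ℓ ≥ 0. Define the filtrations M^{(j)} = {v ∈ M : c(v) ∈ t^j N} and N^{(j)} = {w ∈ N : c'(w) ∈ t^j M}, with images M̄^{(j)}, N̄^{(j)} in M/tM, N/tN. Then for every j, dim_k M̄^{(j)} + dim_k N̄^{(ℓ+1−j)} = n. -/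
open IsLocalRing Submodule Module

section Aux

variable {A : Type*} [CommRing A] [IsDomain A] [IsDiscreteValuationRing A]

/-- If `d` divides every standard coordinate of `y`, it divides every coordinate
w.r.t. any basis. -/
lemma dvd_repr_of_dvd {n : ℕ} (b : Basis (Fin n) A (Fin n → A)) (d : A) (y : Fin n → A)
    (h : ∀ i, d ∣ y i) (i : Fin n) : d ∣ b.repr y i := by
  choose z hz using h
  have hy : y = d • z := by funext i; simpa [Pi.smul_apply, smul_eq_mul] using hz i
  rw [hy, map_smul]
  exact ⟨b.repr z i, rfl⟩

lemma residue_eq_zero_iff (t : A) (ht : Irreducible t) (x : A) :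
    residue A x = 0 ↔ t ∣ x := by
  rw [IsLocalRing.residue_eq_zero_iff, ht.maximalIdeal_eq, Ideal.mem_span_singleton]

/-- The residues of a basis of `A^n` are linearly independent over the residue field. -/
lemma linearIndependent_residue_basis {n : ℕ} (t : A) (ht : Irreducible t)
    (b : Basis (Fin n) A (Fin n → A)) :
    LinearIndependent (ResidueField A)
      (fun i => (fun v (i' : Fin n) => residue A (v i')) (b i)) := by
  rw [Fintype.linearIndependent_iff]
  intro g hg i
  choose x hx using fun i => IsLocalRing.residue_surjective (g i)
  have hsum : ∀ i', residue A ((∑ i, x i • b i) i') = 0 := by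
    intro i'
    have h := congrFun hg i'
    simp only [Finset.sum_apply, Pi.smul_apply, Pi.zero_apply] at h
    calc residue A ((∑ i, x i • b i) i')
        = ∑ i2, residue A (x i2 * b i2 i') := by
          rw [Finset.sum_apply, map_sum]
          exact Finset.sum_congr rfl fun i2 _ => by rw [Pi.smul_apply, smul_eq_mul]
      _ = ∑ i2, g i2 • residue A (b i2 i') := by
          refine Finset.sum_congr rfl fun i2 _ => ?_
          rw [map_mul, ← hx i2, smul_eq_mul]
      _ = 0 := h
  have hdvd : ∀ i', t ∣ (∑ i, x i • b i) i' := fun i' =>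
    (residue_eq_zero_iff t ht _).mp (hsum i')
  have hrepr := dvd_repr_of_dvd b t (∑ i, x i • b i) hdvd i
  rw [show b.repr (∑ i, x i • b i) = (x : Fin n → A) from
    by exact_mod_cast b.repr_sum_self x] at hrepr
  rw [← hx i]
  exact (residue_eq_zero_iff t ht _).mpr hrepr

/-- Key dimension computation: if `c` is diagonal w.r.t. bases `u`, `w` with entries `α`,
then the reduction of `{v | t^j ∣ c v}` has dimension `#{i | t^j ∣ α i}`. -/
lemma keydim {n : ℕ} (t : A) (ht : Irreducible t)
    (c : (Fin n → A) →ₗ[A] (Fin n → A))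
    (u w : Basis (Fin n) A (Fin n → A)) (α : Fin n → A)
    (hα : ∀ i, c (u i) = α i • w i) (j : ℕ) :
    Module.finrank (ResidueField A)
      (Submodule.span (ResidueField A)
        ((fun v i => residue A (v i)) '' {v : Fin n → A | ∀ i, t ^ j ∣ c v i}))
      = Nat.card {i : Fin n // t ^ j ∣ α i} := by
  classical
  set k := ResidueField A
  set ρ : (Fin n → A) → (Fin n → k) := fun v i => residue A (v i) with hρ
  have hspan : Submodule.span k (ρ '' {v : Fin n → A | ∀ i, t ^ j ∣ c v i})
      = Submodule.span k (ρ ∘ u '' {i | t ^ j ∣ α i}) := by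
    apply le_antisymm
    · rw [Submodule.span_le]
      rintro _ ⟨v, hv, rfl⟩
      set x : Fin n → A := fun i => u.repr v i with hxdef
      have hv' : v = ∑ i, x i • u i := (u.sum_repr v).symm
      -- coordinates of c v w.r.t. w are x i * α i
      have hcv : c v = ∑ i, (x i * α i) • w i := by
        rw [hv', map_sum]
        refine Finset.sum_congr rfl fun i _ => ?_
        rw [map_smul, hα i, smul_smul]
      have hcoord : ∀ i, w.repr (c v) i = x i * α i := by
        intro i
        rw [hcv]
        exact congrFun (by exact_mod_cast w.repr_sum_self (fun i => x i * α i)) i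
      have hx0 : ∀ i, ¬ t ^ j ∣ α i → residue A (x i) = 0 := by
        intro i hi
        have hd : t ^ j ∣ x i * α i := by
          rw [← hcoord i]
          exact dvd_repr_of_dvd w (t ^ j) (c v) hv i
        rw [residue_eq_zero_iff t ht]
        by_contra hxt
        have hxu : IsUnit (x i) := by
          by_contra hxu
          exact hxt (Ideal.mem_span_singleton.mp
            (by rw [← ht.maximalIdeal_eq]; exact hxu))
        obtain ⟨r, hr⟩ := hxu.exists_left_inv
        exact hi (Dvd.dvd.trans hd ⟨r, by rw [mul_comm (x i * α i) r, ← mul_assoc, hr, one_mul]⟩)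
      have hρv : ρ v = ∑ i, residue A (x i) • ρ (u i) := by
        funext i'
        rw [Finset.sum_apply]
        calc ρ v i' = residue A ((∑ i, x i • u i) i') := by rw [← hv']
          _ = ∑ i, residue A (x i * u i i') := by
              rw [Finset.sum_apply, map_sum]
              exact Finset.sum_congr rfl fun i2 _ => by rw [Pi.smul_apply, smul_eq_mul]
          _ = ∑ i, (residue A (x i) • ρ (u i)) i' := by
              refine Finset.sum_congr rfl fun i2 _ => ?_
              rw [map_mul, Pi.smul_apply, smul_eq_mul]
      rw [hρv]
      refine Submodule.sum_mem _ fun i _ => ?_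
      by_cases hi : t ^ j ∣ α i
      · exact Submodule.smul_mem _ _ (Submodule.subset_span ⟨i, hi, rfl⟩)
      · rw [hx0 i hi, zero_smul]; exact Submodule.zero_mem _
    · rw [Submodule.span_le]
      rintro _ ⟨i, hi, rfl⟩
      refine Submodule.subset_span ⟨u i, fun i' => ?_, rfl⟩
      rw [hα i]
      exact Dvd.dvd.mul_right hi _
  rw [hspan]
  have hli : LinearIndependent k (fun i => ρ (u i)) :=
    linearIndependent_residue_basis t ht u
  have hli' : LinearIndependent k
      (fun i : {i : Fin n // t ^ j ∣ α i} => ρ (u i)) :=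
    hli.comp _ Subtype.coe_injective
  have hrange : Set.range (fun i : {i : Fin n // t ^ j ∣ α i} => ρ (u i))
      = ρ ∘ u '' {i | t ^ j ∣ α i} := by
    ext y
    constructor
    · rintro ⟨⟨i, hi⟩, rfl⟩; exact ⟨i, hi, rfl⟩
    · rintro ⟨i, hi, rfl⟩; exact ⟨⟨i, hi⟩, rfl⟩
  rw [← hrange, finrank_span_eq_card hli', Nat.card_eq_fintype_card]

end Aux

/-- Let `A` be a DVR with uniformizer `t` and residue field `k`,
`M = N = A^n`, and `c : M → N`, `c' : N → M` with `c ∘ c' = t^ℓ · id` and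
`c' ∘ c = t^ℓ · id`.  With the Jantzen filtrations
`M^{(j)} = {v : c v ∈ t^j N}`, `N^{(j)} = {w : c' w ∈ t^j M}` and their images
`M̄^{(j)}`, `N̄^{(j)}` in `M/tM ≅ k^n`, `N/tN ≅ k^n`, one has for every `j`
`dim_k M̄^{(j)} + dim_k N̄^{(ℓ+1-j)} = n`. -/
theorem stmt9 {A : Type*} [CommRing A] [IsDomain A] [IsDiscreteValuationRing A]
    (t : A) (ht : Irreducible t) (n ℓ : ℕ)
    (c c' : (Fin n → A) →ₗ[A] (Fin n → A))
    (hcc' : c ∘ₗ c' = (t ^ ℓ) • (LinearMap.id : (Fin n → A) →ₗ[A] (Fin n → A)))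
    (hc'c : c' ∘ₗ c = (t ^ ℓ) • (LinearMap.id : (Fin n → A) →ₗ[A] (Fin n → A))) :
    ∀ j : ℕ,
      Module.finrank (IsLocalRing.ResidueField A)
        (Submodule.span (IsLocalRing.ResidueField A)
          ((fun v i => IsLocalRing.residue A (v i)) ''
            {v : Fin n → A | ∀ i, t ^ j ∣ c v i}))
      + Module.finrank (IsLocalRing.ResidueField A)
        (Submodule.span (IsLocalRing.ResidueField A)
          ((fun w i => IsLocalRing.residue A (w i)) ''
            {w : Fin n → A | ∀ i, t ^ (ℓ + 1 - j) ∣ c' w i}))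
      = n := by
  classical
  intro j
  have htl : (t : A) ^ ℓ ≠ 0 := pow_ne_zero _ ht.ne_zero
  -- c is injective
  have hc : Function.Injective c := by
    intro v v' hvv'
    have h1 : c' (c v) = c' (c v') := by rw [hvv']
    have h2 : (t ^ ℓ) • v = (t ^ ℓ) • v' := by
      have hv1 := LinearMap.congr_fun hc'c v
      have hv2 := LinearMap.congr_fun hc'c v'
      simp only [LinearMap.comp_apply, LinearMap.smul_apply, LinearMap.id_apply] at hv1 hv2
      rw [← hv1, ← hv2, h1]
    exact smul_right_injective _ htl h2
  -- Smith normal form of range c inside A^n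
  obtain ⟨m, snf⟩ := Submodule.smithNormalForm (Pi.basisFun A (Fin n)) (LinearMap.range c)
  obtain ⟨bM, bN, f, a, hsnf⟩ := snf
  -- m = n
  have hmn : m = n := by
    have h1 : Module.finrank A ↥(LinearMap.range c) = m := by
      rw [Module.finrank_eq_card_basis bN, Fintype.card_fin]
    have h2 : Module.finrank A ↥(LinearMap.range c) = n := by
      rw [← (LinearEquiv.ofInjective c hc).finrank_eq]
      simp [Module.finrank_pi]
    omega
  have hbij : Function.Bijective f :=
    (Fintype.bijective_iff_injective_and_card f).mpr ⟨f.injective, by simp [hmn]⟩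
  set e : Fin m ≃ Fin n := Equiv.ofBijective f hbij with he
  -- bases u (domain) and w (codomain) diagonalizing c
  set u : Basis (Fin n) A (Fin n → A) :=
    (bN.map (LinearEquiv.ofInjective c hc).symm).reindex e with hu
  set w : Basis (Fin n) A (Fin n → A) := bM with hw
  set α : Fin n → A := fun i => a (e.symm i) with hα
  have hdiag : ∀ i, c (u i) = α i • w i := by
    intro i
    have h1 : u i = (LinearEquiv.ofInjective c hc).symm (bN (e.symm i)) := by
      rw [hu, Module.Basis.reindex_apply, Basis.map_apply]
    have h2 : c ((LinearEquiv.ofInjective c hc).symm (bN (e.symm i)))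
        = ((bN (e.symm i) : (Fin n → A))) := by
      have := (LinearEquiv.ofInjective c hc).apply_symm_apply (bN (e.symm i))
      calc c ((LinearEquiv.ofInjective c hc).symm (bN (e.symm i)))
          = ((LinearEquiv.ofInjective c hc) ((LinearEquiv.ofInjective c hc).symm
            (bN (e.symm i))) : (Fin n → A)) := by
            rw [LinearEquiv.ofInjective_apply]
        _ = _ := by rw [this]
    rw [h1, h2, hsnf (e.symm i)]
    have : f (e.symm i) = i := e.apply_symm_apply i
    rw [show f (e.symm i) = e (e.symm i) from rfl, e.apply_symm_apply]
  -- c' is diagonal with entries β, α i * β i = t ^ ℓ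
  have hβ : ∀ i, ∃ β : A, c' (w i) = β • u i ∧ α i * β = t ^ ℓ := by
    intro i
    have key : α i • c' (w i) = (t ^ ℓ) • u i := by
      rw [← map_smul, ← hdiag i]
      have hv1 := LinearMap.congr_fun hc'c (u i)
      simp only [LinearMap.comp_apply, LinearMap.smul_apply, LinearMap.id_apply] at hv1
      exact hv1
    have hcoord : ∀ i', α i * u.repr (c' (w i)) i' = t ^ ℓ * (if i = i' then 1 else 0) := by
      intro i'
      have h := congrArg (fun z => u.repr z i') key
      simp only [map_smul, Finsupp.smul_apply, smul_eq_mul, Basis.repr_self,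
        Finsupp.single_apply] at h
      exact h
    set β : A := u.repr (c' (w i)) i with hβdef
    have hαβ : α i * β = t ^ ℓ := by
      have := hcoord i; simpa using this
    have hαne : α i ≠ 0 := by
      intro h0; rw [h0, zero_mul] at hαβ; exact htl hαβ.symm
    refine ⟨β, ?_, hαβ⟩
    have hz : ∀ i', i' ≠ i → u.repr (c' (w i)) i' = 0 := by
      intro i' hi'
      have := hcoord i'
      rw [if_neg (fun h => hi' h.symm), mul_zero] at this
      exact (mul_eq_zero.mp this).resolve_left hαne
    have := u.sum_repr (c' (w i))
    rw [← this, Finset.sum_eq_single i]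
    · intro i' _ hi'; rw [hz i' hi', zero_smul]
    · intro h; exact absurd (Finset.mem_univ i) h
  choose β hβ1 hβ2 using hβ
  -- apply the key dimension lemma twice
  rw [keydim t ht c u w α hdiag j, keydim t ht c' w u β hβ1 (ℓ + 1 - j)]
  -- counting
  have htp : Prime t := UniqueFactorizationMonoid.irreducible_iff_prime.mp ht
  have hcompl : ∀ i, (t ^ (ℓ + 1 - j) ∣ β i) ↔ ¬ (t ^ j ∣ α i) := by
    intro i
    obtain ⟨s, hs, hassoc⟩ := (dvd_prime_pow htp ℓ).mp ⟨β i, (hβ2 i).symm⟩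
    -- α i associated to t^s, β i associated to t^(ℓ-s)
    obtain ⟨v, hv⟩ := hassoc.symm
    -- hv : t ^ s * v = α i
    have hβassoc : Associated (β i) (t ^ (ℓ - s)) := by
      have h1 : t ^ s * (v * β i) = t ^ s * t ^ (ℓ - s) := by
        rw [← mul_assoc, hv, hβ2 i, ← pow_add]
        congr 1
        omega
      have h2 : (v : A) * β i = t ^ (ℓ - s) :=
        mul_left_cancel₀ (pow_ne_zero _ ht.ne_zero) h1
      exact ⟨v, by rw [← h2, mul_comm]⟩
    have hd1 : t ^ j ∣ α i ↔ j ≤ s := by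
      constructor
      · intro h
        have : t ^ j ∣ t ^ s := (Associated.dvd_iff_dvd_right hassoc).mp h
        exact (pow_dvd_pow_iff ht.ne_zero ht.not_isUnit).mp this
      · intro h
        exact (Associated.dvd_iff_dvd_right hassoc).mpr (pow_dvd_pow t h)
    have hd2 : t ^ (ℓ + 1 - j) ∣ β i ↔ ℓ + 1 - j ≤ ℓ - s := by
      constructor
      · intro h
        have : t ^ (ℓ + 1 - j) ∣ t ^ (ℓ - s) := (Associated.dvd_iff_dvd_right hβassoc).mp h
        exact (pow_dvd_pow_iff ht.ne_zero ht.not_isUnit).mp this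
      · intro h
        exact (Associated.dvd_iff_dvd_right hβassoc).mpr (pow_dvd_pow t h)
    rw [hd1, hd2]
    omega
  rw [Nat.card_eq_fintype_card, Nat.card_eq_fintype_card, Fintype.card_subtype,
    Fintype.card_subtype]
  have : (Finset.univ.filter fun i => t ^ (ℓ + 1 - j) ∣ β i)
      = Finset.univ.filter fun i => ¬ (t ^ j ∣ α i) := by
    apply Finset.filter_congr
    intro i _
    simp only [hcompl i]
  rw [this, Finset.card_filter_add_card_filter_not, Finset.card_fin]
end
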